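/- (Smoothness estimate for the variational objective.) Let P and Q be probability measures on ℝⁿ with P absolutely continuous with respect to Q, let f: [0,∞) → ℝ be convex, lower semicontinuous, differentiable and α-strongly convex with f(1) = 0, and set h₀ = f'(dP/dQ) and J(h) = ∫ h dP − ∫ f*(h) dQ. Then for every measurable h̃ with ‖h̃ − h₀‖_{2,Q} < ∞ (and all integrals well-defined), J(h₀) − J(h̃) ≤ (1/(2α))·‖h̃ − h₀‖_{2,Q}². -/

import Mathlib

open MeasureTheory Set

/-- Convex conjugate of `f`, where the supremum is taken over `x ≥ 0`
(the domain of `f` is `[0, ∞)`). -/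
noncomputable def fConj (f : ℝ → ℝ) (y : ℝ) : ℝ :=
  sSup {z : ℝ | ∃ x : ℝ, 0 ≤ x ∧ z = x * y - f x}

/-- The `L²(Q)` norm `‖g‖_{2,Q} = (∫ g² dQ)^{1/2}`. -/
noncomputable def normL2 {n : ℕ} (Q : Measure (Fin n → ℝ)) (g : (Fin n → ℝ) → ℝ) : ℝ :=
  Real.sqrt (∫ x, (g x) ^ 2 ∂Q)

/-- strong convexity tangent lower bound -/
lemma strong_tangent {f f' : ℝ → ℝ} {α : ℝ}
    (hderiv : ∀ x ∈ Ici (0:ℝ), HasDerivWithinAt f (f' x) (Ici (0:ℝ)) x)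
    (hstrong : StrongConvexOn (Ici (0:ℝ)) α f)
    {t x : ℝ} (ht : 0 ≤ t) (hx : 0 ≤ x) :
    f t + f' t * (x - t) + α / 2 * (x - t) ^ 2 ≤ f x := by
  have hg : ConvexOn ℝ (Ici (0:ℝ)) (fun x => f x - α / 2 * x ^ 2) := by
    have := strongConvexOn_iff_convex.mp hstrong
    simpa [Real.norm_eq_abs, sq_abs] using this
  have hgd : ∀ s ∈ Ici (0:ℝ), HasDerivWithinAt (fun x => f x - α / 2 * x ^ 2)
      (f' s - α * s) (Ici (0:ℝ)) s := by
    intro s hs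
    have h2 : HasDerivWithinAt (fun x : ℝ => α / 2 * x ^ 2) (α / 2 * (2 * s)) (Ici (0:ℝ)) s :=
      ((hasDerivAt_pow 2 s).const_mul (α / 2)).hasDerivWithinAt.congr_deriv (by ring_nf)
    have : HasDerivWithinAt (fun x => f x - α / 2 * x ^ 2) (f' s - α / 2 * (2 * s)) (Ici (0:ℝ)) s :=
      (hderiv s hs).sub h2
    convert this using 1
    ring
  rcases lt_trichotomy x t with h | h | h
  · have := hg.slope_le_of_hasDerivWithinAt (Set.mem_Ici.mpr hx) (Set.mem_Ici.mpr ht) h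
      (hgd t ht)
    rw [slope_def_field] at this
    have htx : t - x > 0 := by linarith
    rw [div_le_iff₀ htx] at this
    nlinarith [this]
  · subst h; simp
  · have := hg.le_slope_of_hasDerivWithinAt (Set.mem_Ici.mpr ht) (Set.mem_Ici.mpr hx) h
      (hgd t ht)
    rw [slope_def_field] at this
    have htx : x - t > 0 := by linarith
    rw [le_div_iff₀ htx] at this
    nlinarith [this]

/-- value of conjugate at derivative point -/
lemma fConj_deriv {f f' : ℝ → ℝ} {α : ℝ} (hα : 0 < α)
    (hderiv : ∀ x ∈ Ici (0:ℝ), HasDerivWithinAt f (f' x) (Ici (0:ℝ)) x)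
    (hstrong : StrongConvexOn (Ici (0:ℝ)) α f)
    {t : ℝ} (ht : 0 ≤ t) :
    fConj f (f' t) = t * f' t - f t := by
  apply le_antisymm
  · refine csSup_le ⟨0 * f' t - f 0, 0, le_rfl, rfl⟩ ?_
    rintro z ⟨x, hx, rfl⟩
    have := strong_tangent hderiv hstrong ht hx
    nlinarith [sq_nonneg (x - t), hα.le]
  · exact le_csSup ⟨t * f' t - f t, by
      rintro z ⟨x, hx, rfl⟩
      have := strong_tangent hderiv hstrong ht hx
      nlinarith [sq_nonneg (x - t), hα.le]⟩ ⟨t, ht, rfl⟩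

/-- smoothness of the conjugate -/
lemma fConj_smooth {f f' : ℝ → ℝ} {α : ℝ} (hα : 0 < α)
    (hderiv : ∀ x ∈ Ici (0:ℝ), HasDerivWithinAt f (f' x) (Ici (0:ℝ)) x)
    (hstrong : StrongConvexOn (Ici (0:ℝ)) α f)
    {t : ℝ} (ht : 0 ≤ t) (y : ℝ) :
    fConj f y ≤ fConj f (f' t) + t * (y - f' t) + 1 / (2 * α) * (y - f' t) ^ 2 := by
  rw [fConj_deriv hα hderiv hstrong ht]
  refine csSup_le ⟨0 * y - f 0, 0, le_rfl, rfl⟩ ?_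
  rintro z ⟨x, hx, rfl⟩
  have h1 := strong_tangent hderiv hstrong ht hx
  have key : (x - t) * (y - f' t) - α / 2 * (x - t) ^ 2 ≤ 1 / (2 * α) * (y - f' t) ^ 2 := by
    have h2α : (0:ℝ) < 2 * α := by linarith
    have hinv : 1 / (2 * α) * (2 * α) = 1 := by field_simp
    nlinarith [sq_nonneg (α * (x - t) - (y - f' t)), sq_nonneg (y - f' t),
      mul_pos hα hα, sq_nonneg (x - t)]
  nlinarith

/-- Smoothness estimate for the variational objective `J(h) = ∫ h dP − ∫ f*(h) dQ`:
with `h₀ = f'(dP/dQ)`, for every measurable `h̃` one has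
`J(h₀) − J(h̃) ≤ (1/(2α)) ‖h̃ − h₀‖_{2,Q}²`. -/
theorem variational_objective_smoothness {n : ℕ} (P Q : Measure (Fin n → ℝ))
    [IsProbabilityMeasure P] [IsProbabilityMeasure Q] (hPQ : P ≪ Q)
    (f f' : ℝ → ℝ) (α : ℝ) (hα : 0 < α)
    (hconv : ConvexOn ℝ (Ici (0:ℝ)) f)
    (hlsc : LowerSemicontinuousOn f (Ici (0:ℝ)))
    (hderiv : ∀ x ∈ Ici (0:ℝ), HasDerivWithinAt f (f' x) (Ici (0:ℝ)) x)
    (hstrong : StrongConvexOn (Ici (0:ℝ)) α f)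
    (hf1 : f 1 = 0)
    (hint1 : Integrable (fun x => f' ((P.rnDeriv Q x).toReal)) P)
    (hint2 : Integrable (fun x => fConj f (f' ((P.rnDeriv Q x).toReal))) Q) :
    ∀ htil : (Fin n → ℝ) → ℝ, Measurable htil →
      Integrable htil P → Integrable (fun x => fConj f (htil x)) Q →
      Integrable (fun x => (htil x - f' ((P.rnDeriv Q x).toReal)) ^ 2) Q →
      ((∫ x, f' ((P.rnDeriv Q x).toReal) ∂P)
          - ∫ x, fConj f (f' ((P.rnDeriv Q x).toReal)) ∂Q)
        - ((∫ x, htil x ∂P) - ∫ x, fConj f (htil x) ∂Q)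
      ≤ (1 / (2 * α)) * (normL2 Q (fun x => htil x - f' ((P.rnDeriv Q x).toReal))) ^ 2 := by
  intro htil hmeas hiP hiC hiSq
  set r : (Fin n → ℝ) → ℝ := fun x => (P.rnDeriv Q x).toReal with hr
  set h0 : (Fin n → ℝ) → ℝ := fun x => f' (r x) with hh0
  haveI := Measure.haveLebesgueDecomposition_of_sigmaFinite P Q
  -- rewrite P-integrals as Q-integrals
  have hir : Integrable (fun x => r x * (h0 x - htil x)) Q := by
    have := (integrable_rnDeriv_smul_iff (f := fun x => h0 x - htil x) hPQ).mpr
      (hint1.sub hiP)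
    simpa [smul_eq_mul] using this
  have hP2Q : ∫ x, (h0 x - htil x) ∂P = ∫ x, r x * (h0 x - htil x) ∂Q := by
    rw [← integral_rnDeriv_smul hPQ]
    simp [smul_eq_mul]
    rfl
  -- pointwise bound
  have hpt : ∀ x, r x * (h0 x - htil x) + (fConj f (htil x) - fConj f (h0 x))
      ≤ 1 / (2 * α) * (htil x - h0 x) ^ 2 := by
    intro x
    have ht : 0 ≤ r x := ENNReal.toReal_nonneg
    have := fConj_smooth hα hderiv hstrong ht (htil x)
    nlinarith [this]
  -- normL2 squared
  have hnn : 0 ≤ ∫ x, (htil x - h0 x) ^ 2 ∂Q :=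
    integral_nonneg fun x => sq_nonneg _
  have hnorm : (normL2 Q (fun x => htil x - h0 x)) ^ 2 = ∫ x, (htil x - h0 x) ^ 2 ∂Q := by
    rw [normL2, Real.sq_sqrt hnn]
  -- main computation
  have hLHS : ((∫ x, h0 x ∂P) - ∫ x, fConj f (h0 x) ∂Q)
        - ((∫ x, htil x ∂P) - ∫ x, fConj f (htil x) ∂Q)
      = ∫ x, (r x * (h0 x - htil x) + (fConj f (htil x) - fConj f (h0 x))) ∂Q := by
    have hsub : Integrable (fun x => fConj f (htil x) - fConj f (h0 x)) Q := hiC.sub hint2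
    rw [integral_add hir hsub, ← hP2Q, integral_sub hint1 hiP,
      integral_sub hiC hint2]
    ring
  rw [hLHS, hnorm]
  calc ∫ x, (r x * (h0 x - htil x) + (fConj f (htil x) - fConj f (h0 x))) ∂Q
      ≤ ∫ x, 1 / (2 * α) * (htil x - h0 x) ^ 2 ∂Q := by
        refine integral_mono (hir.add (hiC.sub hint2)) (hiSq.const_mul _) hpt
    _ = 1 / (2 * α) * ∫ x, (htil x - h0 x) ^ 2 ∂Q := integral_const_mul _ _
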